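/- Let a, b be positive semidefinite n×n matrices with aba = a and bab = b, a ≠ 0, and let p, q be the projections onto their ranges. If qp = v|qp| is the polar decomposition of qp, then v*v = p and vv* = q; in particular p and q are Murray–von Neumann equivalent (have equal rank). -/

import Mathlib

open Matrix ComplexOrder

variable {n : Type*} [Fintype n] [DecidableEq n]

/-- The modulus `|x| = (xᴴ x)^{1/2}` of a square complex matrix. -/
noncomputable def matAbs (x : Matrix n n ℂ) : Matrix n n ℂ :=
  (Matrix.posSemidef_conjTranspose_mul_self x).1.eigenvectorUnitary.1 *
    diagonal ((↑) ∘ (√·) ∘ (Matrix.posSemidef_conjTranspose_mul_self x).1.eigenvalues) *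
    (star (Matrix.posSemidef_conjTranspose_mul_self x).1.eigenvectorUnitary : Matrix n n ℂ)

private lemma matAbs_spec {d : ℕ} (x : Matrix (Fin d) (Fin d) ℂ) : (matAbs x).PosSemidef ∧ matAbs x * matAbs x = xᴴ * x := by
  have hx := Matrix.posSemidef_conjTranspose_mul_self x
  constructor
  · have hD : (diagonal ((↑) ∘ (√·) ∘ hx.1.eigenvalues) : Matrix (Fin d) (Fin d) ℂ).PosSemidef := by
      rw [posSemidef_diagonal_iff]
      intro i
      simp only [Function.comp_apply]
      exact_mod_cast Real.sqrt_nonneg _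
    have := hD.mul_mul_conjTranspose_same (hx.1.eigenvectorUnitary.1)
    simpa [matAbs, Matrix.star_eq_conjTranspose] using this
  · have hU : (star hx.1.eigenvectorUnitary : Matrix (Fin d) (Fin d) ℂ) * hx.1.eigenvectorUnitary.1 = 1 :=
      Unitary.star_mul_self_of_mem hx.1.eigenvectorUnitary.2
    have hsp := hx.1.spectral_theorem
    rw [Unitary.conjStarAlgAut_apply] at hsp
    have hdd : (diagonal ((↑) ∘ (√·) ∘ hx.1.eigenvalues) : Matrix (Fin d) (Fin d) ℂ) *
        diagonal ((↑) ∘ (√·) ∘ hx.1.eigenvalues) = diagonal (RCLike.ofReal ∘ hx.1.eigenvalues) := by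
      rw [diagonal_mul_diagonal]
      congr 1; funext i
      simp only [Function.comp_apply]
      rw [← Complex.ofReal_mul, Real.mul_self_sqrt (hx.eigenvalues_nonneg i)]
      rfl
    unfold matAbs
    conv_rhs => rw [hsp]
    calc _ = (hx.1.eigenvectorUnitary.1 * diagonal ((↑) ∘ (√·) ∘ hx.1.eigenvalues)) *
          ((star hx.1.eigenvectorUnitary : Matrix (Fin d) (Fin d) ℂ) * hx.1.eigenvectorUnitary.1) *
          (diagonal ((↑) ∘ (√·) ∘ hx.1.eigenvalues) * (star hx.1.eigenvectorUnitary : Matrix (Fin d) (Fin d) ℂ)) := by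
            simp only [Matrix.mul_assoc]
      _ = _ := by rw [hU, Matrix.mul_one, Matrix.mul_assoc, ← Matrix.mul_assoc _ _ (star _ : Matrix _ _ ℂ), hdd, Matrix.mul_assoc]

private lemma range_eq_of_ker_eq_of_le {d : ℕ} {A B : Matrix (Fin d) (Fin d) ℂ}
    (hker : LinearMap.ker A.mulVecLin = LinearMap.ker B.mulVecLin)
    (hle : LinearMap.range A.mulVecLin ≤ LinearMap.range B.mulVecLin) :
    LinearMap.range A.mulVecLin = LinearMap.range B.mulVecLin := by
  refine Submodule.eq_of_le_of_finrank_eq hle ?_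
  have h1 := LinearMap.finrank_range_add_finrank_ker A.mulVecLin
  have h2 := LinearMap.finrank_range_add_finrank_ker B.mulVecLin
  rw [hker] at h1
  omega

private lemma range_mul_le' {d : ℕ} (A B : Matrix (Fin d) (Fin d) ℂ) :
    LinearMap.range (A * B).mulVecLin ≤ LinearMap.range A.mulVecLin := by
  rw [Matrix.mulVecLin_mul]
  exact LinearMap.range_comp_le_range _ _

private lemma mul_eq_self_of_range_le {d : ℕ} {p c : Matrix (Fin d) (Fin d) ℂ}
    (hp2 : p * p = p)
    (h : LinearMap.range c.mulVecLin ≤ LinearMap.range p.mulVecLin) :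
    p * c = c := by
  ext i j
  obtain ⟨y, hy⟩ := h ⟨Pi.single j 1, rfl⟩
  simp only [Matrix.mulVecLin_apply] at hy
  have h1 : p.mulVec (c.mulVec (Pi.single j 1)) = c.mulVec (Pi.single j 1) := by
    rw [← hy, Matrix.mulVec_mulVec, hp2]
  have := congrFun h1 i
  simpa [Matrix.mulVec, dotProduct, Matrix.mul_apply, Pi.single_apply] using this

/-- Two Hermitian idempotents with the same range are equal. -/
private lemma proj_ext {d : ℕ} {p q : Matrix (Fin d) (Fin d) ℂ}
    (hp1 : pᴴ = p) (hp2 : p * p = p) (hq1 : qᴴ = q) (hq2 : q * q = q)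
    (h : LinearMap.range p.mulVecLin = LinearMap.range q.mulVecLin) : p = q := by
  have h1 : p * q = q := mul_eq_self_of_range_le hp2 h.ge
  have h2 : q * p = p := mul_eq_self_of_range_le hq2 h.le
  calc p = q * p := h2.symm
    _ = (pᴴ * qᴴ)ᴴ := by simp [hp1, hq1]
    _ = (p * q)ᴴ := by rw [hp1, hq1]
    _ = q := by rw [h1, hq1]

/-- for `a, b ≥ 0` with `aba = a`, `bab = b`, `a ≠ 0`, projections `p, q`
onto their ranges and the polar decomposition `qp = v|qp|` (with `v` the partial
isometry whose initial projection `vᴴv` is the projection onto the range of `|qp|`),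
one has `vᴴv = p` and `vvᴴ = q`; in particular `rank p = rank q`. -/
theorem polar_partial_isometry {d : ℕ} (a b p q v : Matrix (Fin d) (Fin d) ℂ)
    (ha : a.PosSemidef) (hb : b.PosSemidef)
    (haba : a * b * a = a) (hbab : b * a * b = b) (ha0 : a ≠ 0)
    (hp1 : pᴴ = p) (hp2 : p * p = p)
    (hp3 : LinearMap.range p.mulVecLin = LinearMap.range a.mulVecLin)
    (hq1 : qᴴ = q) (hq2 : q * q = q)
    (hq3 : LinearMap.range q.mulVecLin = LinearMap.range b.mulVecLin)
    (hpolar : q * p = v * matAbs (q * p))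
    (hinit1 : (vᴴ * v) * (vᴴ * v) = vᴴ * v) (hinit2 : (vᴴ * v)ᴴ = vᴴ * v)
    (hinit3 : LinearMap.range (vᴴ * v).mulVecLin
      = LinearMap.range (matAbs (q * p)).mulVecLin) :
    vᴴ * v = p ∧ v * vᴴ = q ∧ p.rank = q.rank := by
  -- basic facts: p fixes a, q fixes b
  have hpa : p * a = a := mul_eq_self_of_range_le hp2 hp3.ge
  have hap : a * p = a := by
    have := congrArg conjTranspose hpa
    rwa [conjTranspose_mul, hp1, ha.1] at this
  have hqb : q * b = b := mul_eq_self_of_range_le hq2 hq3.ge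
  have hbq : b * q = b := by
    have := congrArg conjTranspose hqb
    rwa [conjTranspose_mul, hq1, hb.1] at this
  -- ker (q*p) = ker p
  have hker_qp : LinearMap.ker (q * p).mulVecLin = LinearMap.ker p.mulVecLin := by
    apply le_antisymm
    · intro x hx
      rw [LinearMap.mem_ker, Matrix.mulVecLin_apply] at hx ⊢
      rw [← Matrix.mulVec_mulVec] at hx
      obtain ⟨y, hy⟩ : p.mulVec x ∈ LinearMap.range a.mulVecLin := by
        rw [← hp3]; exact ⟨x, rfl⟩
      rw [Matrix.mulVecLin_apply] at hy
      have hqa : q.mulVec (a.mulVec y) = 0 := by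
        rw [hy]
        exact hx
      have h2 := congrArg b.mulVec hqa
      rw [Matrix.mulVec_mulVec, Matrix.mulVec_mulVec, hbq, Matrix.mulVec_zero] at h2
      have h3 := congrArg a.mulVec h2
      rw [Matrix.mulVec_mulVec, ← Matrix.mul_assoc, haba, Matrix.mulVec_zero] at h3
      rw [← hy, h3]
    · intro x hx
      rw [LinearMap.mem_ker, Matrix.mulVecLin_apply] at hx ⊢
      rw [← Matrix.mulVec_mulVec, hx, Matrix.mulVec_zero]
  -- ker (p*q) = ker q (symmetric)
  have hker_pq : LinearMap.ker (p * q).mulVecLin = LinearMap.ker q.mulVecLin := by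
    apply le_antisymm
    · intro x hx
      rw [LinearMap.mem_ker, Matrix.mulVecLin_apply] at hx ⊢
      rw [← Matrix.mulVec_mulVec] at hx
      obtain ⟨y, hy⟩ : q.mulVec x ∈ LinearMap.range b.mulVecLin := by
        rw [← hq3]; exact ⟨x, rfl⟩
      rw [Matrix.mulVecLin_apply] at hy
      have hpb : p.mulVec (b.mulVec y) = 0 := by
        rw [hy]
        exact hx
      have h2 := congrArg a.mulVec hpb
      rw [Matrix.mulVec_mulVec, Matrix.mulVec_mulVec, hap, Matrix.mulVec_zero] at h2
      have h3 := congrArg b.mulVec h2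
      rw [Matrix.mulVec_mulVec, ← Matrix.mul_assoc, hbab, Matrix.mulVec_zero] at h3
      rw [← hy, h3]
    · intro x hx
      rw [LinearMap.mem_ker, Matrix.mulVecLin_apply] at hx ⊢
      rw [← Matrix.mulVec_mulVec, hx, Matrix.mulVec_zero]
  -- the modulus s = |qp| and M = (qp)ᴴ(qp)
  set s : Matrix (Fin d) (Fin d) ℂ := matAbs (q * p) with hs_def
  have hsPSD : s.PosSemidef := (matAbs_spec (q * p)).1
  have hs1 : sᴴ = s := hsPSD.1
  have hss : s * s = (q * p)ᴴ * (q * p) :=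
    (matAbs_spec (q * p)).2
  -- range s = range M = range p
  have hkerM : LinearMap.ker ((q * p)ᴴ * (q * p)).mulVecLin = LinearMap.ker p.mulVecLin := by
    rw [Matrix.ker_mulVecLin_conjTranspose_mul_self, hker_qp]
  have hkerS : LinearMap.ker s.mulVecLin = LinearMap.ker p.mulVecLin := by
    have hss' : sᴴ * s = (q * p)ᴴ * (q * p) := by rw [hs1]; exact hss
    rw [← hkerM, ← hss', Matrix.ker_mulVecLin_conjTranspose_mul_self]
  have hrangeM : LinearMap.range ((q * p)ᴴ * (q * p)).mulVecLin
      = LinearMap.range p.mulVecLin := by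
    refine range_eq_of_ker_eq_of_le hkerM ?_
    have h1 : (q * p)ᴴ * (q * p) = p * (q * p) := by
      rw [conjTranspose_mul, hp1, hq1, Matrix.mul_assoc, ← Matrix.mul_assoc q q p, hq2]
    rw [h1]
    exact range_mul_le' _ _
  have hrangeS : LinearMap.range s.mulVecLin = LinearMap.range p.mulVecLin := by
    have hle : LinearMap.range ((q * p)ᴴ * (q * p)).mulVecLin
        ≤ LinearMap.range s.mulVecLin := by
      rw [← hss]; exact range_mul_le' _ _
    have := range_eq_of_ker_eq_of_le (hkerM.trans hkerS.symm) hle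
    rw [← this, hrangeM]
  -- first conjunct
  have hvp : vᴴ * v = p := by
    refine proj_ext hinit2 hinit1 hp1 hp2 ?_
    rw [hinit3, hrangeS]
  -- v is a partial isometry: v * p = v
  have hvpv : v * p = v := by
    have h0 : (v * p - v)ᴴ * (v * p - v) = 0 := by
      have e1 : vᴴ * (v * p) = p := by rw [← Matrix.mul_assoc, hvp, hp2]
      have e2 : (v * p)ᴴ = p * vᴴ := by rw [conjTranspose_mul, hp1]
      rw [conjTranspose_sub, e2, Matrix.sub_mul, Matrix.mul_sub, Matrix.mul_sub,
        Matrix.mul_assoc p vᴴ (v * p), e1, Matrix.mul_assoc p vᴴ v, hvp, hp2]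
      simp only [sub_self]
    have := Matrix.conjTranspose_mul_self_eq_zero.mp h0
    rwa [sub_eq_zero] at this
  -- range v = range (q*p)
  have hrange_v : LinearMap.range v.mulVecLin = LinearMap.range (q * p).mulVecLin := by
    apply le_antisymm
    · rintro _ ⟨x, rfl⟩
      rw [Matrix.mulVecLin_apply]
      have h1 : v.mulVec x = v.mulVec (p.mulVec x) := by
        rw [Matrix.mulVec_mulVec, hvpv]
      obtain ⟨y, hy⟩ : p.mulVec x ∈ LinearMap.range s.mulVecLin := by
        rw [hrangeS]; exact ⟨x, rfl⟩
      rw [Matrix.mulVecLin_apply] at hy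
      rw [h1, ← hy, Matrix.mulVec_mulVec, ← hpolar]
      exact ⟨y, Matrix.mulVecLin_apply _ _⟩
    · rw [hpolar]
      exact range_mul_le' _ _
  -- range (q*p) = range q via rank count
  have hrange_qp : LinearMap.range (q * p).mulVecLin = LinearMap.range q.mulVecLin := by
    refine Submodule.eq_of_le_of_finrank_eq (range_mul_le' _ _) ?_
    have hconj : (p * q)ᴴ = q * p := by rw [conjTranspose_mul, hp1, hq1]
    have hr : (q * p).rank = (p * q).rank := by
      rw [← hconj, Matrix.rank_conjTranspose]
    have h1 := LinearMap.finrank_range_add_finrank_ker (p * q).mulVecLin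
    have h2 := LinearMap.finrank_range_add_finrank_ker q.mulVecLin
    rw [hker_pq] at h1
    have hr' : Module.finrank ℂ (LinearMap.range (q * p).mulVecLin)
        = Module.finrank ℂ (LinearMap.range (p * q).mulVecLin) := hr
    omega
  -- second conjunct
  have hvq : v * vᴴ = q := by
    refine proj_ext ?_ ?_ hq1 hq2 ?_
    · simp
    · calc v * vᴴ * (v * vᴴ) = v * (vᴴ * v) * vᴴ := by noncomm_ring
        _ = v * vᴴ := by rw [hvp, hvpv]
    · have hle1 : LinearMap.range (v * vᴴ).mulVecLin ≤ LinearMap.range v.mulVecLin :=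
        range_mul_le' _ _
      have hle2 : LinearMap.range v.mulVecLin ≤ LinearMap.range (v * vᴴ).mulVecLin := by
        rintro _ ⟨x, rfl⟩
        rw [Matrix.mulVecLin_apply]
        refine ⟨v.mulVec x, ?_⟩
        rw [Matrix.mulVecLin_apply, Matrix.mulVec_mulVec, Matrix.mul_assoc, hvp, hvpv]
      rw [le_antisymm hle1 hle2, hrange_v, hrange_qp]
  refine ⟨hvp, hvq, ?_⟩
  rw [← hvp, ← hvq, Matrix.rank_conjTranspose_mul_self, Matrix.rank_self_mul_conjTranspose]
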